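/- Let C > 1 be a real and M ≥ 1 an integer. Then the function G_M(q) = (1-q²)^M - (1/C)(1-q)^M + 1/C - 1 has exactly one zero in the half-open interval (0,1], and this zero lies in the open interval (0,1). Moreover G_M(0) = 0 and G_M(1) = 1/C - 1 < 0. -/

import Mathlib

private lemma rg_hasDerivAt (C : ℝ) (M : ℕ) (q : ℝ) :
    HasDerivAt (fun q : ℝ => (1 - q ^ 2) ^ M - (1 / C) * (1 - q) ^ M + 1 / C - 1)
      ((M : ℝ) * (1 - q) ^ (M - 1) * (1 / C - 2 * q * (1 + q) ^ (M - 1))) q := by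
  have h1 : HasDerivAt (fun q : ℝ => 1 - q ^ 2) (-(2 * q)) q := by
    simpa using (hasDerivAt_pow 2 q).const_sub 1
  have h2 : HasDerivAt (fun q : ℝ => (1 - q ^ 2) ^ M)
      (((M : ℝ) * (1 - q ^ 2) ^ (M - 1)) * (-(2 * q))) q :=
    (hasDerivAt_pow M _).comp q h1
  have h3 : HasDerivAt (fun q : ℝ => 1 - q) (-1) q := by
    simpa using (hasDerivAt_id q).const_sub 1
  have h4 : HasDerivAt (fun q : ℝ => (1 - q) ^ M)
      (((M : ℝ) * (1 - q) ^ (M - 1)) * (-1)) q :=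
    (hasDerivAt_pow M _).comp q h3
  have h5 := (((h2.sub (h4.const_mul (1 / C))).add_const (1 / C)).sub_const 1)
  refine h5.congr_deriv ?_
  have hfac : (1 - q ^ 2) = (1 - q) * (1 + q) := by ring
  rw [hfac, mul_pow]
  ring

theorem random_graph_sitebond_unique_root (C : ℝ) (hC : 1 < C) (M : ℕ) (hM : 1 ≤ M) :
    (∃! q : ℝ, q ∈ Set.Ioc (0:ℝ) 1 ∧
        (1 - q ^ 2) ^ M - (1 / C) * (1 - q) ^ M + 1 / C - 1 = 0) ∧
    (∀ q ∈ Set.Ioc (0:ℝ) 1,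
        (1 - q ^ 2) ^ M - (1 / C) * (1 - q) ^ M + 1 / C - 1 = 0 → q ∈ Set.Ioo (0:ℝ) 1) ∧
    (1 - (0:ℝ) ^ 2) ^ M - (1 / C) * (1 - (0:ℝ)) ^ M + 1 / C - 1 = 0 ∧
    (1 - (1:ℝ) ^ 2) ^ M - (1 / C) * (1 - (1:ℝ)) ^ M + 1 / C - 1 = 1 / C - 1 ∧
    1 / C - 1 < 0 := by
  have hC0 : (0:ℝ) < C := lt_trans one_pos hC
  have hinv0 : (0:ℝ) < 1 / C := by positivity
  have hinv1 : 1 / C < 1 := by rw [div_lt_one hC0]; exact hC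
  set F : ℝ → ℝ := fun q => (1 - q ^ 2) ^ M - (1 / C) * (1 - q) ^ M + 1 / C - 1 with hF
  have hF0 : F 0 = 0 := by simp [hF]
  have hF1 : F 1 = 1 / C - 1 := by
    simp [hF, zero_pow (by omega : M ≠ 0)]
  have hF1neg : F 1 < 0 := by rw [hF1]; linarith
  have hFc : Continuous F := by
    apply Continuous.sub
    apply Continuous.add
    apply Continuous.sub <;> fun_prop
    fun_prop
    fun_prop
  -- the auxiliary increasing function
  set h : ℝ → ℝ := fun q => 2 * q * (1 + q) ^ (M - 1) with hh
  have hmono : StrictMonoOn h (Set.Icc (0:ℝ) 1) := by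
    intro a ha b hb hab
    have h1 : 2 * a < 2 * b := by linarith
    have h2 : (1 + a) ^ (M - 1) ≤ (1 + b) ^ (M - 1) :=
      pow_le_pow_left₀ (by linarith [ha.1]) (by linarith) _
    have h3 : (0:ℝ) < (1 + a) ^ (M - 1) := pow_pos (by linarith [ha.1]) _
    exact mul_lt_mul h1 h2 h3 (by linarith [ha.1, hb.1])
  have hhc : Continuous h := by fun_prop
  have hh0 : h 0 = 0 := by simp [hh]
  have hpow1 : (1:ℝ) ≤ 2 ^ (M - 1) := one_le_pow₀ (by norm_num : (1:ℝ) ≤ 2)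
  have hh1 : 1 / C < h 1 := by
    have : h 1 = 2 * 2 ^ (M - 1) := by simp [hh]; ring
    rw [this]; nlinarith
  obtain ⟨s, hs, hseq⟩ : ∃ s ∈ Set.Ioo (0:ℝ) 1, h s = 1 / C := by
    have := intermediate_value_Ioo (by norm_num : (0:ℝ) ≤ 1) hhc.continuousOn
      (a := 0) (b := 1) (Set.mem_Ioo.mpr ⟨by rw [hh0]; exact hinv0, hh1⟩)
    obtain ⟨s, hs, heq⟩ := this
    exact ⟨s, hs, heq⟩
  have hMpos : (0:ℝ) < (M:ℝ) := by exact_mod_cast (by omega : 0 < M)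
  -- F strictly increasing on [0,s]
  have hFmono : StrictMonoOn F (Set.Icc 0 s) := by
    apply strictMonoOn_of_deriv_pos (convex_Icc _ _) hFc.continuousOn
    intro x hx
    rw [interior_Icc] at hx
    rw [(rg_hasDerivAt C M x).deriv]
    have hx1 : x < 1 := lt_trans hx.2 hs.2
    have hhx : h x < 1 / C := by
      rw [← hseq]
      exact hmono ⟨hx.1.le, hx1.le⟩ ⟨hs.1.le, hs.2.le⟩ hx.2
    have : (0:ℝ) < 1 / C - 2 * x * (1 + x) ^ (M - 1) := by
      have := hhx; simp only [hh] at this; linarith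
    exact mul_pos (mul_pos hMpos (pow_pos (by linarith) _)) this
  -- F strictly decreasing on [s,1]
  have hFanti : StrictAntiOn F (Set.Icc s 1) := by
    apply strictAntiOn_of_deriv_neg (convex_Icc _ _) hFc.continuousOn
    intro x hx
    rw [interior_Icc] at hx
    rw [(rg_hasDerivAt C M x).deriv]
    have hhx : 1 / C < h x := by
      rw [← hseq]
      exact hmono ⟨hs.1.le, hs.2.le⟩ ⟨(lt_trans hs.1 hx.1).le, hx.2.le⟩ hx.1
    have : 1 / C - 2 * x * (1 + x) ^ (M - 1) < 0 := by
      have := hhx; simp only [hh] at this; linarith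
    exact mul_neg_of_pos_of_neg (mul_pos hMpos (pow_pos (by linarith [hx.2]) _)) this
  have hFs : 0 < F s := by
    have := hFmono ⟨le_rfl, hs.1.le⟩ ⟨hs.1.le, le_rfl⟩ hs.1
    rwa [hF0] at this
  -- root in (s,1)
  obtain ⟨r, hr, hreq⟩ : ∃ r ∈ Set.Ioo s 1, F r = 0 := by
    have := intermediate_value_Ioo' hs.2.le hFc.continuousOn
      (a := s) (b := 1) (Set.mem_Ioo.mpr ⟨hF1neg, hFs⟩)
    obtain ⟨r, hr, heq⟩ := this
    exact ⟨r, hr, heq⟩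
  have hr0 : 0 < r := lt_trans hs.1 hr.1
  refine ⟨⟨r, ⟨⟨hr0, hr.2.le⟩, hreq⟩, ?_⟩, ?_, ?_, ?_, by linarith⟩
  · rintro y ⟨⟨hy0, hy1⟩, hyeq⟩
    have hys : s < y := by
      by_contra hle
      push_neg at hle
      have := hFmono ⟨le_rfl, hs.1.le⟩ ⟨hy0.le, hle⟩ hy0
      rw [hF0] at this
      have hy' : F y = 0 := hyeq
      linarith
    exact hFanti.injOn ⟨hys.le, hy1⟩ ⟨hr.1.le, hr.2.le⟩ (hyeq.trans hreq.symm)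
  · rintro q ⟨hq0, hq1⟩ heq
    refine ⟨hq0, lt_of_le_of_ne hq1 ?_⟩
    rintro rfl
    rw [show ((1:ℝ) - 1 ^ 2) ^ M - 1 / C * (1 - 1) ^ M + 1 / C - 1 = F 1 from rfl, hF1] at heq
    linarith
  · exact hF0
  · exact hF1
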